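/- For 4/3 < p < 2, let φ(v) = ∫_0^∞ λ e^{−λ} exp(−(v/2)λ²) dλ for v ≥ 0. Then ∫_0^∞ v^{(p−2)/(2(p−1))} φ(v) dv = 2^{(3p−4)/(2(p−1))} Γ((3p−4)/(2(p−1))) Γ((2−p)/(p−1)); in particular the function v ↦ v^{(p−2)/(2(p−1))} φ(v) is integrable on (0,∞). -/

import Mathlib

open MeasureTheory Real

/-- `φ(v) = ∫_0^∞ λ e^{−λ} e^{−vλ²/2} dλ`. -/
noncomputable def phiFun (v : ℝ) : ℝ :=
  ∫ l in Set.Ioi (0 : ℝ), l * Real.exp (-l) * Real.exp (-(v / 2) * l ^ 2)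

open Set in
lemma integral_rpow_phi_key (a : ℝ) (ha1 : (-1 : ℝ) < a) (ha0 : a < 0) :
    (∫ v in Ioi (0 : ℝ), v ^ a * phiFun v
        = 2 ^ (a + 1) * Real.Gamma (a + 1) * Real.Gamma (-(2 * a))) ∧
      IntegrableOn (fun v => v ^ a * phiFun v) (Ioi 0) := by
  set f : ℝ × ℝ → ℝ :=
    fun q => q.1 ^ a * (q.2 * Real.exp (-q.2) * Real.exp (-(q.1 / 2) * q.2 ^ 2)) with hf
  have ha1' : 0 < a + 1 := by linarith
  have ha2 : (0 : ℝ) < -(2 * a) := by linarith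
  -- rewrite of sections
  have hsec : ∀ l : ℝ, (fun v => f (v, l)) =
      fun v => (l * Real.exp (-l)) * (v ^ a * Real.exp (-(l ^ 2 / 2) * v ^ (1 : ℝ))) := by
    intro l
    funext v
    simp only [hf, Real.rpow_one]
    rw [show -(v / 2) * l ^ 2 = -(l ^ 2 / 2) * v by ring]
    ring
  -- sections are integrable
  have hsecInt : ∀ l ∈ Ioi (0 : ℝ), IntegrableOn (fun v => f (v, l)) (Ioi 0) := by
    intro l hl
    have hl0 : (0 : ℝ) < l := hl
    rw [hsec l]
    exact ((integrableOn_rpow_mul_exp_neg_mul_rpow ha1 one_pos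
      (by positivity : (0 : ℝ) < l ^ 2 / 2)).const_mul _)
  -- value of the sections integrals
  have hpow : ∀ l ∈ Ioi (0 : ℝ),
      (l ^ 2 / 2 : ℝ) ^ (-(a + 1)) = 2 ^ (a + 1) * l ^ (-(2 * (a + 1))) := by
    intro l hl
    have hl0 : (0 : ℝ) < l := hl
    rw [Real.div_rpow (by positivity) (by norm_num), ← Real.rpow_two,
      ← Real.rpow_mul hl0.le, Real.rpow_neg (by norm_num : (0:ℝ) ≤ 2), div_inv_eq_mul, mul_comm,
      show (2 : ℝ) * -(a + 1) = -(2 * (a + 1)) by ring]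
  have hinner : ∀ l ∈ Ioi (0 : ℝ), (∫ v in Ioi (0 : ℝ), f (v, l))
      = Real.Gamma (a + 1) * 2 ^ (a + 1) * (Real.exp (-l) * l ^ (-(2 * a) - 1)) := by
    intro l hl
    have hl0 : (0 : ℝ) < l := hl
    rw [hsec l, integral_const_mul,
      integral_rpow_mul_exp_neg_mul_rpow one_pos ha1 (by positivity : (0 : ℝ) < l ^ 2 / 2)]
    rw [show (-(a + 1) / 1 : ℝ) = -(a + 1) by ring, show ((a + 1) / 1 : ℝ) = a + 1 by ring,
      hpow l hl]
    have hll : l ^ (-(2 * a) - 1) = l ^ (-(2 * (a + 1))) * l := by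
      rw [← Real.rpow_add_one hl0.ne']
      congr 1
      ring
    rw [hll]
    ring
  -- nonnegativity: norms of sections
  have hnorm : ∀ l ∈ Ioi (0 : ℝ),
      (∫ v in Ioi (0 : ℝ), ‖f (v, l)‖) = ∫ v in Ioi (0 : ℝ), f (v, l) := by
    intro l hl
    have hl0 : (0 : ℝ) < l := hl
    refine setIntegral_congr_fun measurableSet_Ioi fun v hv => ?_
    have hv0 : (0 : ℝ) < v := hv
    simp only [hf, Real.norm_eq_abs]
    rw [abs_of_nonneg (by positivity)]
  -- measurability
  have hmeas : AEStronglyMeasurable f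
      ((volume.restrict (Ioi (0:ℝ))).prod (volume.restrict (Ioi (0:ℝ)))) := by
    apply Measurable.aestronglyMeasurable
    fun_prop
  -- integrability of the explicit outer integrand
  have hg : IntegrableOn
      (fun l : ℝ => Real.Gamma (a + 1) * 2 ^ (a + 1) * (Real.exp (-l) * l ^ (-(2 * a) - 1)))
      (Ioi 0) :=
    (Real.GammaIntegral_convergent ha2).const_mul _
  -- integrability on the product
  have hF : Integrable f
      ((volume.restrict (Ioi (0:ℝ))).prod (volume.restrict (Ioi (0:ℝ)))) := by
    rw [integrable_prod_iff' hmeas]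
    constructor
    · filter_upwards [ae_restrict_mem measurableSet_Ioi] with l hl
      exact hsecInt l hl
    · refine hg.congr ?_
      filter_upwards [ae_restrict_mem measurableSet_Ioi] with l hl
      rw [hnorm l hl, hinner l hl]
  -- main pointwise rewriting
  have hmain : (fun v : ℝ => v ^ a * phiFun v) = fun v => ∫ l in Ioi (0 : ℝ), f (v, l) := by
    funext v
    rw [phiFun, ← integral_const_mul]
  constructor
  · calc ∫ v in Ioi (0 : ℝ), v ^ a * phiFun v
        = ∫ v in Ioi (0 : ℝ), ∫ l in Ioi (0 : ℝ), f (v, l) := by rw [hmain]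
      _ = ∫ l in Ioi (0 : ℝ), ∫ v in Ioi (0 : ℝ), f (v, l) := integral_integral_swap hF
      _ = ∫ l in Ioi (0 : ℝ),
            Real.Gamma (a + 1) * 2 ^ (a + 1) * (Real.exp (-l) * l ^ (-(2 * a) - 1)) :=
          setIntegral_congr_fun measurableSet_Ioi fun l hl => hinner l hl
      _ = Real.Gamma (a + 1) * 2 ^ (a + 1) *
            ∫ l in Ioi (0 : ℝ), Real.exp (-l) * l ^ (-(2 * a) - 1) := by
          rw [integral_const_mul]
      _ = 2 ^ (a + 1) * Real.Gamma (a + 1) * Real.Gamma (-(2 * a)) := by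
          rw [← Real.Gamma_eq_integral ha2]
          ring
  · rw [IntegrableOn, hmain]
    exact hF.integral_prod_left

theorem integral_rpow_phi (p : ℝ) (hp1 : 4 / 3 < p) (hp2 : p < 2) :
    (∫ v in Set.Ioi (0 : ℝ), v ^ ((p - 2) / (2 * (p - 1))) * phiFun v
        = 2 ^ ((3 * p - 4) / (2 * (p - 1))) * Real.Gamma ((3 * p - 4) / (2 * (p - 1))) *
            Real.Gamma ((2 - p) / (p - 1))) ∧
      IntegrableOn (fun v => v ^ ((p - 2) / (2 * (p - 1))) * phiFun v) (Set.Ioi 0) := by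
  have hp0 : (0 : ℝ) < p - 1 := by linarith
  set a : ℝ := (p - 2) / (2 * (p - 1)) with ha
  have ha1 : (-1 : ℝ) < a := by
    rw [ha, lt_div_iff₀ (by linarith : (0:ℝ) < 2 * (p - 1))]
    linarith
  have ha0 : a < 0 := div_neg_of_neg_of_pos (by linarith) (by linarith)
  have e1 : (3 * p - 4) / (2 * (p - 1)) = a + 1 := by
    rw [ha]; field_simp; ring
  have e2 : (2 - p) / (p - 1) = -(2 * a) := by
    rw [ha]; field_simp; ring
  rw [e1, e2]
  exact integral_rpow_phi_key a ha1 ha0
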